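/- With δ₁(X) = X ∧ (Σ_{p=1}^{d} t_p [x_p]_0) and δ₄(X) = Σ_{1≤p<q≤d} (−1)^{q−p} [x₁,…,x_{p−1}, x_p⋯x_q, x_{q+1},…,x_d | t₁,…,t_{p−1},t_q,…,t_d] ∧ [x_{q−1}^{−1},…,x_p^{−1} | t_q−t_{q−1},…,t_q−t_p], and using [x^{−1}]_0 = −[x]_0 and [xy]_0 = [x]_0 + [y]_0, one has δ₁δ₄ + δ₄δ₁ = 0, where each δ_i is extended to wedge products as a graded derivation δ_i(a∧b) = δ_i(a)∧b − a∧δ_i(b). -/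
import Mathlib


/- STATEMENT 4: δ₁δ₄ + δ₄δ₁ = 0.  Generating-series symbols
`[x_a,…,x_b | t_a,…,t_b]` are free generators indexed by their list of
arguments (units of F) and their list of `t`-parameters; the weight-1 logarithm
part is `F*` written additively, so that `[x⁻¹]₀ = −[x]₀` and
`[xy]₀ = [x]₀ + [y]₀` hold automatically.  Since the identity is a polynomial
identity in the formal variables t₁,…,t_d over ℤ, it is stated for arbitrary
integer values of the tᵢ.  Wedges are products of `ι`'s in the exterior algebra
over ℤ.  `δ₁(X) = X ∧ Σ_p t_p[x_p]₀`, and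
`δ₄(X) = Σ_{p<q} (−1)^{q−p} [x₁,…,x_p⋯x_q,…,x_d | t₁,…,t_{p−1},t_q,…,t_d]
         ∧ [x_{q−1}⁻¹,…,x_p⁻¹ | t_q−t_{q−1},…,t_q−t_p]`,
both extended to wedge products as graded derivations. -/

noncomputable section

open Finset

variable (F : Type*) [Field F]

/-- generating-series symbols (free) together with the weight-1 part `F*`. -/
abbrev SymMod : Type _ := FreeAbelianGroup (List Fˣ × List ℤ) × Additive Fˣ

variable {F}

/-- the free generator `[xs | ts]`. -/
def gen (xs : List Fˣ) (ts : List ℤ) : SymMod F := (FreeAbelianGroup.of (xs, ts), 0)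

/-- the weight-1 logarithm symbol `[u]₀`. -/
def lg (u : Fˣ) : SymMod F := (0, Additive.ofMul u)

/-- `Σ_p t_p [x_p]₀` for the symbol `[xs | ts]`. -/
def logComb (xs : List Fˣ) (ts : List ℤ) : SymMod F :=
  ∑ i ∈ range xs.length, (ts.getD i 0) • lg (xs.getD i 1)

/-- `δ₁` of a single generator: `[xs|ts] ∧ Σ_p t_p [x_p]₀`. -/
def D1 (xs : List Fˣ) (ts : List ℤ) : ExteriorAlgebra ℤ (SymMod F) :=
  ExteriorAlgebra.ι ℤ (gen xs ts) * ExteriorAlgebra.ι ℤ (logComb xs ts)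

lemma lg_inv (v : Fˣ) : lg v⁻¹ = - lg (F := F) v := by
  simp [lg, Prod.ext_iff]

lemma lg_prod {ι : Type*} (s : Finset ι) (f : ι → Fˣ) :
    lg (∏ i ∈ s, f i) = ∑ i ∈ s, lg (F := F) (f i) := by
  refine Prod.ext ?_ ?_ <;>
    simp [lg, Prod.fst_sum, Prod.snd_sum, ofMul_prod]

lemma logComb_nil (ts : List ℤ) : logComb (F := F) [] ts = 0 := by
  simp [logComb]

lemma logComb_cons (x : Fˣ) (xs : List Fˣ) (s : ℤ) (ts : List ℤ) :
    logComb (x :: xs) (s :: ts) = s • lg x + logComb xs ts := by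
  unfold logComb
  rw [List.length_cons, Finset.sum_range_succ']
  simp [add_comm]

lemma logComb_append (xs ys : List Fˣ) (ts ss : List ℤ) (h : xs.length = ts.length) :
    logComb (xs ++ ys) (ts ++ ss) = logComb xs ts + logComb ys ss := by
  induction xs generalizing ts with
  | nil =>
    obtain rfl : ts = [] := by simpa using (List.length_eq_zero_iff.mp h.symm)
    simp [logComb_nil]
  | cons x xs ih =>
    match ts with
    | [] => simp at h
    | s :: ts =>
      simp only [List.cons_append, logComb_cons, ih ts (by simpa using h), add_assoc]

lemma logComb_map (l : List ℕ) (f : ℕ → Fˣ) (g : ℕ → ℤ) :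
    logComb (l.map f) (l.map g) = (l.map (fun r => g r • lg (F := F) (f r))).sum := by
  induction l with
  | nil => simp [logComb_nil]
  | cons a l ih => simp [logComb_cons, ih]

lemma sum_map_range' {M : Type*} [AddCommMonoid M] (h : ℕ → M) (a n : ℕ) :
    ((List.range' a n).map h).sum = ∑ i ∈ Finset.Ico a (a + n), h i := by
  induction n generalizing a with
  | zero => simp
  | succ n ih =>
    rw [List.range'_succ, List.map_cons, List.sum_cons, ih,
      Finset.sum_eq_sum_Ico_succ_bot (by omega : a < a + (n + 1)),
      show a + 1 + n = a + (n + 1) by omega]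

lemma key (u : ℕ → Fˣ) (t : ℕ → ℤ) {p q d : ℕ} (hp : 1 ≤ p) (hpq : p < q) (hqd : q ≤ d) :
    logComb (((List.range' 1 (p - 1)).map u) ++ (∏ r ∈ Icc p q, u r) ::
        ((List.range' (q + 1) (d - q)).map u))
      (((List.range' 1 (p - 1)).map t) ++ ((List.range' q (d - q + 1)).map t))
    + logComb ((((List.range' p (q - p)).map fun r => (u r)⁻¹).reverse))
      ((((List.range' p (q - p)).map fun r => t q - t r).reverse))
    = logComb ((List.range' 1 d).map u) ((List.range' 1 d).map t) := by
  have hneg : ∀ (a : ℤ) (x : SymMod F), a • -x = (-a) • x := fun a x => by module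
  have hsmul : ∀ (c : ℤ) (s : Finset ℕ) (f : ℕ → SymMod F),
      c • ∑ r ∈ s, f r = ∑ r ∈ s, c • f r := by
    have hdist : ∀ (c : ℤ) (x y : SymMod F), c • (x + y) = c • x + c • y := fun c x y => by
      module
    intro c s f
    induction s using Finset.cons_induction with
    | empty => simp
    | cons a s ha ih => rw [Finset.sum_cons, Finset.sum_cons, hdist, ih]
  have hadd : ∀ (a b : ℤ) (x : SymMod F), a • x + b • x = (a + b) • x := fun a b x => by
    module
  have hrev : logComb ((((List.range' p (q - p)).map fun r => (u r)⁻¹).reverse))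
      ((((List.range' p (q - p)).map fun r => t q - t r).reverse))
      = ∑ r ∈ Finset.Ico p q, (t r - t q) • lg (u r) := by
    rw [← List.map_reverse, ← List.map_reverse, logComb_map, List.map_reverse, List.sum_reverse,
      sum_map_range', show p + (q - p) = q by omega]
    refine Finset.sum_congr rfl fun r _ => ?_
    rw [lg_inv, hneg, neg_sub]
  have hmain : logComb (((List.range' 1 (p - 1)).map u) ++ (∏ r ∈ Icc p q, u r) ::
        ((List.range' (q + 1) (d - q)).map u))
      (((List.range' 1 (p - 1)).map t) ++ ((List.range' q (d - q + 1)).map t))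
      = (∑ r ∈ Finset.Ico 1 p, t r • lg (u r))
        + ((∑ r ∈ Finset.Icc p q, t q • lg (u r))
          + ∑ r ∈ Finset.Ico (q + 1) (d + 1), t r • lg (u r)) := by
    rw [List.range'_succ, List.map_cons, logComb_append _ _ _ _ (by simp),
      logComb_cons, logComb_map, logComb_map, sum_map_range', sum_map_range',
      show 1 + (p - 1) = p by omega, show q + 1 + (d - q) = d + 1 by omega,
      lg_prod, hsmul]
  rw [hrev, hmain, logComb_map, sum_map_range', show 1 + d = d + 1 by omega]
  have e1 : (∑ r ∈ Finset.Icc p q, t q • lg (u r))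
      + (∑ r ∈ Finset.Ico p q, (t r - t q) • lg (u r))
      = ∑ r ∈ Finset.Ico p (q + 1), t r • lg (F := F) (u r) := by
    rw [show Finset.Icc p q = Finset.Ico p (q + 1) from (Finset.Ico_add_one_right_eq_Icc p q).symm,
      Finset.sum_Ico_succ_top hpq.le, Finset.sum_Ico_succ_top hpq.le, add_right_comm]
    congr 1
    rw [← Finset.sum_add_distrib]
    refine Finset.sum_congr rfl fun r _ => ?_
    rw [hadd]
    congr 1
    ring
  calc (∑ r ∈ Finset.Ico 1 p, t r • lg (u r))
        + ((∑ r ∈ Finset.Icc p q, t q • lg (u r))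
          + ∑ r ∈ Finset.Ico (q + 1) (d + 1), t r • lg (u r))
      + (∑ r ∈ Finset.Ico p q, (t r - t q) • lg (u r))
      = (∑ r ∈ Finset.Ico 1 p, t r • lg (u r))
        + (((∑ r ∈ Finset.Icc p q, t q • lg (u r))
          + ∑ r ∈ Finset.Ico p q, (t r - t q) • lg (u r))
          + ∑ r ∈ Finset.Ico (q + 1) (d + 1), t r • lg (u r)) := by abel
    _ = ∑ r ∈ Finset.Ico 1 (d + 1), t r • lg (u r) := by
        rw [e1, ← add_assoc, Finset.sum_Ico_consecutive _ hp (by omega),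
          Finset.sum_Ico_consecutive _ (by omega) (by omega)]

theorem delta_one_delta_four_anticommute (u : ℕ → Fˣ) (t : ℕ → ℤ) (d : ℕ) :
    -- data of the δ₄-term attached to a pair p < q:
    (let mX : ℕ → ℕ → List Fˣ := fun p q =>
      ((List.range' 1 (p - 1)).map u) ++ (∏ r ∈ Icc p q, u r) ::
        ((List.range' (q + 1) (d - q)).map u)
    let mT : ℕ → ℕ → List ℤ := fun p q =>
      ((List.range' 1 (p - 1)).map t) ++ ((List.range' q (d - q + 1)).map t)
    let iX : ℕ → ℕ → List Fˣ := fun p q =>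
      (((List.range' p (q - p)).map fun r => (u r)⁻¹).reverse)
    let iT : ℕ → ℕ → List ℤ := fun p q =>
      (((List.range' p (q - p)).map fun r => t q - t r).reverse)
    let PQ : Finset (ℕ × ℕ) := (Icc 1 d ×ˢ Icc 1 d).filter fun z => z.1 < z.2
    -- δ₁δ₄(X):
    (∑ z ∈ PQ, ((-1 : ℤ) ^ (z.2 - z.1)) •
        (D1 (mX z.1 z.2) (mT z.1 z.2) *
            ExteriorAlgebra.ι ℤ (gen (iX z.1 z.2) (iT z.1 z.2))
          - ExteriorAlgebra.ι ℤ (gen (mX z.1 z.2) (mT z.1 z.2)) *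
            D1 (iX z.1 z.2) (iT z.1 z.2)))
    -- + δ₄δ₁(X):
    + (∑ z ∈ PQ, ((-1 : ℤ) ^ (z.2 - z.1)) •
        (ExteriorAlgebra.ι ℤ (gen (mX z.1 z.2) (mT z.1 z.2)) *
          ExteriorAlgebra.ι ℤ (gen (iX z.1 z.2) (iT z.1 z.2)))) *
      ExteriorAlgebra.ι ℤ (logComb ((List.range' 1 d).map u) ((List.range' 1 d).map t))
    ) = 0 := by
  dsimp only
  rw [Finset.sum_mul]
  simp only [smul_mul_assoc]
  rw [← Finset.sum_add_distrib]
  refine Finset.sum_eq_zero fun z hz => ?_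
  obtain ⟨p, q⟩ := z
  rw [Finset.mem_filter, Finset.mem_product, Finset.mem_Icc, Finset.mem_Icc] at hz
  obtain ⟨⟨⟨hp, -⟩, -, hqd⟩, hpq⟩ := hz
  rw [← smul_add]
  rw [show logComb ((List.range' 1 d).map u) ((List.range' 1 d).map t)
      = logComb (((List.range' 1 (p - 1)).map u) ++ (∏ r ∈ Icc p q, u r) ::
          ((List.range' (q + 1) (d - q)).map u))
        (((List.range' 1 (p - 1)).map t) ++ ((List.range' q (d - q + 1)).map t))
      + logComb ((((List.range' p (q - p)).map fun r => (u r)⁻¹).reverse))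
        ((((List.range' p (q - p)).map fun r => t q - t r).reverse))
      from (key u t hp hpq hqd).symm, map_add, D1, D1]
  have h0 := ExteriorAlgebra.ι_add_mul_swap (R := ℤ)
    (logComb (((List.range' 1 (p - 1)).map u) ++ (∏ r ∈ Icc p q, u r) ::
        ((List.range' (q + 1) (d - q)).map u))
      (((List.range' 1 (p - 1)).map t) ++ ((List.range' q (d - q + 1)).map t)))
    (gen ((((List.range' p (q - p)).map fun r => (u r)⁻¹).reverse))
        ((((List.range' p (q - p)).map fun r => t q - t r).reverse)))
  rw [show (∀ (A B C D : ExteriorAlgebra ℤ (SymMod F)),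
      A * B * C - A * (C * D) + A * C * (B + D) = A * (B * C + C * B))
      from fun A B C D => by noncomm_ring, h0, mul_zero, smul_zero]

end
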